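/- The family of matrices B_{a,b,c}, indexed by the triples (a,b,c) ∈ P, is an F-basis of the Terwilliger F-algebra T (a basis of T as an F-submodule of Matrix X X F), and the cardinality of P equals 2^(2·n₁) · 5^(n₂). -/

import Mathlib

open Matrix Finset
open scoped Classical

set_option synthInstance.maxHeartbeats 1000000
set_option maxHeartbeats 2000000

noncomputable section

variable {n : ℕ}

/-- The disagreement set of two tuples. -/
def dis {U : Fin n → Type} [∀ i, DecidableEq (U i)] (x y : ∀ i, U i) : Finset (Fin n) :=
  Finset.univ.filter fun i => x i ≠ y i

/-- `S° = {i ∈ S | 2 < |U i|}`. -/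
def circ (U : Fin n → Type) [∀ i, Fintype (U i)] (S : Finset (Fin n)) : Finset (Fin n) :=
  S.filter fun i => 2 < Fintype.card (U i)

/-- The valency `k_S`. -/
def val (U : Fin n → Type) [∀ i, Fintype (U i)] (S : Finset (Fin n)) : ℕ :=
  ∏ i ∈ S, (Fintype.card (U i) - 1)

variable (U : Fin n → Type) [∀ i, Fintype (U i)] [∀ i, DecidableEq (U i)]
variable (F : Type) [Field F]

/-- The adjacency matrix `A_S`. -/
def Amat (S : Finset (Fin n)) : Matrix (∀ i, U i) (∀ i, U i) F :=
  Matrix.of fun x y => if dis x y = S then 1 else 0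

/-- The dual idempotent `E_S^*(x₀)`. -/
def Emat (x₀ : ∀ i, U i) (S : Finset (Fin n)) : Matrix (∀ i, U i) (∀ i, U i) F :=
  Matrix.diagonal fun y => if dis x₀ y = S then 1 else 0

/-- The Terwilliger `F`-algebra of the factorial scheme with respect to the base point `x₀`:
the subalgebra of `Matrix X X F` generated by the adjacency matrices and dual idempotents. -/
def Tw (x₀ : ∀ i, U i) : Subalgebra F (Matrix (∀ i, U i) (∀ i, U i) F) :=
  Algebra.adjoin F ({M | ∃ S, M = Amat U F S} ∪ {M | ∃ S, M = Emat U F x₀ S})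

/-- `B_{g,h,i} = ∑_{g △ i ⊆ j ⊆ h} E_g A_j E_i`. -/
def Bmat (x₀ : ∀ i, U i) (g h i : Finset (Fin n)) : Matrix (∀ i, U i) (∀ i, U i) F :=
  ∑ j ∈ Finset.univ.filter (fun j => symmDiff g i ⊆ j ∧ j ⊆ h),
    Emat U F x₀ g * Amat U F j * Emat U F x₀ i

/-- The index set `P` of triples `(a,b,c)` with `a △ c ⊆ b ⊆ (a △ c) ∪ (a ∩ c)°`. -/
def Pset : Finset (Finset (Fin n) × Finset (Fin n) × Finset (Fin n)) :=
  Finset.univ.filter fun t =>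
    symmDiff t.1 t.2.2 ⊆ t.2.1 ∧ t.2.1 ⊆ symmDiff t.1 t.2.2 ∪ circ U (t.1 ∩ t.2.2)

/-- `n₁ = |{i | card (U i) = 2}|`. -/
def nOne : ℕ := (Finset.univ.filter fun i : Fin n => Fintype.card (U i) = 2).card

/-- `n₂ = |{i | 2 < card (U i)}|`. -/
def nTwo : ℕ := (Finset.univ.filter fun i : Fin n => 2 < Fintype.card (U i)).card

-- basic lemmas
lemma mem_dis {U : Fin n → Type} [∀ i, DecidableEq (U i)] {x y : ∀ i, U i} {k : Fin n} :
    k ∈ dis x y ↔ x k ≠ y k := by simp [dis]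

lemma dis_eq_iff {U : Fin n → Type} [∀ i, DecidableEq (U i)] (x y : ∀ i, U i)
    (S : Finset (Fin n)) : dis x y = S ↔ ∀ k, (x k ≠ y k ↔ k ∈ S) := by
  simp [Finset.ext_iff, mem_dis]

lemma dis_eq_empty {U : Fin n → Type} [∀ i, DecidableEq (U i)] (x y : ∀ i, U i) :
    dis x y = ∅ ↔ x = y := by
  simp [dis_eq_iff, funext_iff]

def Mmat (x₀ : ∀ i, U i) (g j i : Finset (Fin n)) : Matrix (∀ i, U i) (∀ i, U i) F :=
  Matrix.of fun x y => if dis x₀ x = g ∧ dis x y = j ∧ dis x₀ y = i then 1 else 0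

lemma Mmat_eq (x₀ : ∀ i, U i) (g j i : Finset (Fin n)) :
    Emat U F x₀ g * Amat U F j * Emat U F x₀ i = Mmat U F x₀ g j i := by
  ext x y
  simp only [Emat, Mmat, Matrix.diagonal_mul, Matrix.mul_diagonal, Matrix.of_apply, Amat]
  by_cases h1 : dis x₀ x = g <;> by_cases h2 : dis x y = j <;> by_cases h3 : dis x₀ y = i <;>
    simp [h1, h2, h3]


lemma mem_Pset_iff (hU : ∀ i, 2 ≤ Fintype.card (U i)) (x₀ : ∀ i, U i)
    (t : Finset (Fin n) × Finset (Fin n) × Finset (Fin n)) :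
    t ∈ Pset U ↔ ∃ x y : ∀ i, U i, dis x₀ x = t.1 ∧ dis x y = t.2.1 ∧ dis x₀ y = t.2.2 := by
  obtain ⟨g, j, i⟩ := t
  simp only [Pset, Finset.mem_filter, Finset.mem_univ, true_and]
  constructor
  · rintro ⟨hs1, hs2⟩
    have hu : ∀ k, ∃ u : U k, u ≠ x₀ k := by
      intro k
      have : Nontrivial (U k) := Fintype.one_lt_card_iff_nontrivial.mp
        (lt_of_lt_of_le one_lt_two (hU k))
      exact exists_ne (x₀ k)
    choose u hu using hu
    have hw : ∀ k, ∃ w : U k, 2 < Fintype.card (U k) → (w ≠ x₀ k ∧ w ≠ u k) := by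
      intro k
      by_cases hc : 2 < Fintype.card (U k)
      · have h1 : 0 < (((Finset.univ : Finset (U k)).erase (x₀ k)).erase (u k)).card := by
          have e1 : (Finset.univ : Finset (U k)).card - 1 ≤
              ((Finset.univ : Finset (U k)).erase (x₀ k)).card :=
            Finset.pred_card_le_card_erase
          have e2 : ((Finset.univ : Finset (U k)).erase (x₀ k)).card - 1 ≤
              (((Finset.univ : Finset (U k)).erase (x₀ k)).erase (u k)).card :=
            Finset.pred_card_le_card_erase
          have : 2 < (Finset.univ : Finset (U k)).card := by
            simpa [Finset.card_univ] using hc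
          omega
        obtain ⟨w, hw⟩ := Finset.card_pos.mp h1
        simp only [Finset.mem_erase] at hw
        exact ⟨w, fun _ => ⟨hw.2.1, hw.1⟩⟩
      · exact ⟨x₀ k, fun h => absurd h hc⟩
    choose w hw using hw
    refine ⟨fun k => if k ∈ g then u k else x₀ k,
      fun k => if k ∈ i then (if k ∈ g ∧ k ∈ j then w k else u k) else x₀ k, ?_, ?_, ?_⟩
    · rw [dis_eq_iff]
      intro k
      by_cases hg : k ∈ g <;> simp [hg, (hu k).symm, Ne.symm (hu k)]
    · rw [dis_eq_iff]
      intro k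
      by_cases hg : k ∈ g <;> by_cases hi : k ∈ i <;> by_cases hj : k ∈ j
      · have hcirc : k ∈ circ U (g ∩ i) := by
          have := hs2 hj
          simp only [Finset.mem_union, Finset.mem_symmDiff, hg, hi] at this
          tauto
        simp only [circ, Finset.mem_filter] at hcirc
        simp [hg, hi, hj, Ne.symm (hw k hcirc.2).2]
      · simp [hg, hi, hj]
      · simp [hg, hi, hj, hu k]
      · exact absurd (hs1 (by simp [Finset.mem_symmDiff, hg, hi])) hj
      · simp [hg, hi, hj, Ne.symm (hu k)]
      · exact absurd (hs1 (by simp [Finset.mem_symmDiff, hg, hi])) hj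
      · have := hs2 hj
        simp only [Finset.mem_union, Finset.mem_symmDiff, circ, Finset.mem_filter,
          Finset.mem_inter, hg, hi] at this
        tauto
      · simp [hg, hi, hj]
    · rw [dis_eq_iff]
      intro k
      by_cases hi : k ∈ i
      · by_cases hgj : k ∈ g ∧ k ∈ j
        · have hcirc : k ∈ circ U (g ∩ i) := by
            have := hs2 hgj.2
            simp only [Finset.mem_union, Finset.mem_symmDiff, hgj.1, hi] at this
            tauto
          simp only [circ, Finset.mem_filter] at hcirc
          simp [hi, hgj, Ne.symm (hw k hcirc.2).1]
        · simp [hi, hgj, Ne.symm (hu k)]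
      · simp [hi]
  · rintro ⟨x, y, hx, hxy, hy⟩
    subst hx hxy hy
    constructor
    · intro k hk
      rw [Finset.mem_symmDiff] at hk
      rw [mem_dis]
      rcases hk with ⟨h1, h2⟩ | ⟨h1, h2⟩ <;> rw [mem_dis] at h1 <;>
        simp only [mem_dis, not_not] at h2
      · intro h; exact h1 (h2 ▸ h ▸ rfl)
      · intro h; exact h1 (h ▸ h2 ▸ rfl)
    · intro k hk
      rw [mem_dis] at hk
      by_cases h1 : x₀ k = x k <;> by_cases h2 : x₀ k = y k
      · exact absurd (h1 ▸ h2) hk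
      · exact Finset.mem_union_left _
          (by simp [Finset.mem_symmDiff, mem_dis, h1, h2, hk, Ne.symm hk])
      · exact Finset.mem_union_left _
          (by simp [Finset.mem_symmDiff, mem_dis, h1, h2, hk, Ne.symm hk])
      · refine Finset.mem_union_right _ ?_
        simp only [circ, Finset.mem_filter, Finset.mem_inter, mem_dis]
        refine ⟨⟨h1, h2⟩, ?_⟩
        rw [Fintype.two_lt_card_iff]
        exact ⟨x₀ k, x k, y k, h1, h2, hk⟩

lemma card_eq_and {α : Type} [DecidableEq α] (a : α) (Q : Prop) :
    Nat.card {u : α // u = a ∧ Q} = if Q then 1 else 0 := by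
  split_ifs with h
  · rw [Nat.card_congr (Equiv.subtypeEquivRight (q := fun u : α => u = a)
      (fun u => by simp [h]))]
    haveI : Unique {u : α // u = a} := ⟨⟨⟨a, rfl⟩⟩, fun u => Subtype.ext u.2⟩
    exact Nat.card_unique
  · haveI : IsEmpty {u : α // u = a ∧ Q} := ⟨fun u => h u.2.2⟩
    exact Nat.card_of_isEmpty

lemma card_triple {α : Type} [DecidableEq α] (a c b : α) : ({a, c, b} : Finset α).card =
    if a = c then (if b = c then 1 else 2)
    else if a = b then 2 else if b = c then 2 else 3 := by
  split_ifs with hac hbc hab hbc2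
  · subst hac; subst hbc; simp
  · subst hac; rw [Finset.insert_idem, Finset.card_pair (fun h => hbc h.symm)]
  · subst hab; rw [show ({a, c, a} : Finset α) = {a, c} by
      ext u; by_cases h : u = a <;> simp [h]]
    rw [Finset.card_pair hac]
  · subst hbc2; rw [show ({a, b, b} : Finset α) = {a, b} by
      ext u; by_cases h : u = a <;> simp [h]]
    rw [Finset.card_pair hab]
  · rw [Finset.card_insert_of_notMem (by simp [hac, hab]),
      Finset.card_insert_of_notMem
        (by simp only [Finset.mem_singleton]; exact fun h => hbc2 h.symm)]
    simp

lemma card_compl_triple {α : Type} [Fintype α] [DecidableEq α] (a c b : α) :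
    Nat.card {u : α // ¬(u = a ∨ u = c ∨ u = b)} =
      Nat.card α - ({a, c, b} : Finset α).card := by
  have e : Nat.card {u : α // ¬(u = a ∨ u = c ∨ u = b)}
      = ((↑({a, c, b} : Finset α) : Set α)ᶜ).ncard := by
    rw [← Nat.card_coe_set_eq]
    exact Nat.card_congr (Equiv.subtypeEquivRight (fun u => by
      simp [not_or, Set.mem_compl_iff]))
  have h2 := Set.ncard_add_ncard_compl (↑({a, c, b} : Finset α) : Set α)
    (Set.toFinite _) (Set.toFinite _)
  rw [e, ← Set.ncard_coe_finset {a, c, b}]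
  omega

lemma card_pattern3 {α : Type} [Fintype α] [DecidableEq α] (a c b a' b' : α)
    (h1 : a = c ↔ a' = c) (h2 : b = c ↔ b' = c) (h3 : a = b ↔ a' = b')
    (e1 e2 e3 : Prop) :
    Nat.card {u : α // (u ≠ a ↔ e1) ∧ (u ≠ c ↔ e2) ∧ (u ≠ b ↔ e3)} =
    Nat.card {u : α // (u ≠ a' ↔ e1) ∧ (u ≠ c ↔ e2) ∧ (u ≠ b' ↔ e3)} := by
  have hba : b = a ↔ b' = a' := ⟨fun h => (h3.mp h.symm).symm, fun h => (h3.mpr h.symm).symm⟩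
  have hca : c = a ↔ c = a' := ⟨fun h => (h1.mp h.symm).symm, fun h => (h1.mpr h.symm).symm⟩
  have hcb : c = b ↔ c = b' := ⟨fun h => (h2.mp h.symm).symm, fun h => (h2.mpr h.symm).symm⟩
  have nba : b ≠ a ↔ b' ≠ a' := not_congr hba
  have nca : c ≠ a ↔ c ≠ a' := not_congr hca
  have ncb : c ≠ b ↔ c ≠ b' := not_congr hcb
  have nac : a ≠ c ↔ a' ≠ c := not_congr h1
  have nbc : b ≠ c ↔ b' ≠ c := not_congr h2
  have nab : a ≠ b ↔ a' ≠ b' := not_congr h3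
  by_cases he1 : e1
  · by_cases he2 : e2
    · by_cases he3 : e3
      · -- all true
        have E1 : Nat.card {u : α // (u ≠ a ↔ e1) ∧ (u ≠ c ↔ e2) ∧ (u ≠ b ↔ e3)}
            = Nat.card {u : α // ¬(u = a ∨ u = c ∨ u = b)} :=
          Nat.card_congr (Equiv.subtypeEquivRight (fun u => by
            simp [he1, he2, he3, not_or]))
        have E2 : Nat.card {u : α // (u ≠ a' ↔ e1) ∧ (u ≠ c ↔ e2) ∧ (u ≠ b' ↔ e3)}
            = Nat.card {u : α // ¬(u = a' ∨ u = c ∨ u = b')} :=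
          Nat.card_congr (Equiv.subtypeEquivRight (fun u => by
            simp [he1, he2, he3, not_or]))
        rw [E1, E2, card_compl_triple, card_compl_triple]
        congr 1
        rw [card_triple, card_triple,
          if_congr h1 (if_congr h2 rfl rfl) (if_congr h3 rfl (if_congr h2 rfl rfl))]
      · -- e3 false : u = b
        have E1 : Nat.card {u : α // (u ≠ a ↔ e1) ∧ (u ≠ c ↔ e2) ∧ (u ≠ b ↔ e3)}
            = Nat.card {u : α // u = b ∧ ((b ≠ a ↔ e1) ∧ (b ≠ c ↔ e2))} :=
          Nat.card_congr (Equiv.subtypeEquivRight (fun u => by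
            constructor
            · rintro ⟨q1, q2, q3⟩
              have hub : u = b := of_not_not (fun h => he3 (q3.mp h))
              subst hub; exact ⟨rfl, q1, q2⟩
            · rintro ⟨rfl, q1, q2⟩
              exact ⟨q1, q2, iff_of_false (fun h => h rfl) he3⟩))
        have E2 : Nat.card {u : α // (u ≠ a' ↔ e1) ∧ (u ≠ c ↔ e2) ∧ (u ≠ b' ↔ e3)}
            = Nat.card {u : α // u = b' ∧ ((b' ≠ a' ↔ e1) ∧ (b' ≠ c ↔ e2))} :=
          Nat.card_congr (Equiv.subtypeEquivRight (fun u => by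
            constructor
            · rintro ⟨q1, q2, q3⟩
              have hub : u = b' := of_not_not (fun h => he3 (q3.mp h))
              subst hub; exact ⟨rfl, q1, q2⟩
            · rintro ⟨rfl, q1, q2⟩
              exact ⟨q1, q2, iff_of_false (fun h => h rfl) he3⟩))
        rw [E1, E2, card_eq_and, card_eq_and,
          propext (and_congr (iff_congr nba Iff.rfl) (iff_congr nbc Iff.rfl))]
    · -- e2 false : u = c
      have E1 : Nat.card {u : α // (u ≠ a ↔ e1) ∧ (u ≠ c ↔ e2) ∧ (u ≠ b ↔ e3)}
          = Nat.card {u : α // u = c ∧ ((c ≠ a ↔ e1) ∧ (c ≠ b ↔ e3))} :=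
        Nat.card_congr (Equiv.subtypeEquivRight (fun u => by
          constructor
          · rintro ⟨q1, q2, q3⟩
            have hub : u = c := of_not_not (fun h => he2 (q2.mp h))
            subst hub; exact ⟨rfl, q1, q3⟩
          · rintro ⟨rfl, q1, q3⟩
            exact ⟨q1, iff_of_false (fun h => h rfl) he2, q3⟩))
      have E2 : Nat.card {u : α // (u ≠ a' ↔ e1) ∧ (u ≠ c ↔ e2) ∧ (u ≠ b' ↔ e3)}
          = Nat.card {u : α // u = c ∧ ((c ≠ a' ↔ e1) ∧ (c ≠ b' ↔ e3))} :=
        Nat.card_congr (Equiv.subtypeEquivRight (fun u => by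
          constructor
          · rintro ⟨q1, q2, q3⟩
            have hub : u = c := of_not_not (fun h => he2 (q2.mp h))
            subst hub; exact ⟨rfl, q1, q3⟩
          · rintro ⟨rfl, q1, q3⟩
            exact ⟨q1, iff_of_false (fun h => h rfl) he2, q3⟩))
      rw [E1, E2, card_eq_and, card_eq_and,
        propext (and_congr (iff_congr nca Iff.rfl) (iff_congr ncb Iff.rfl))]
  · -- e1 false : u = a
    have E1 : Nat.card {u : α // (u ≠ a ↔ e1) ∧ (u ≠ c ↔ e2) ∧ (u ≠ b ↔ e3)}
        = Nat.card {u : α // u = a ∧ ((a ≠ c ↔ e2) ∧ (a ≠ b ↔ e3))} :=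
      Nat.card_congr (Equiv.subtypeEquivRight (fun u => by
        constructor
        · rintro ⟨q1, q2, q3⟩
          have hub : u = a := of_not_not (fun h => he1 (q1.mp h))
          subst hub; exact ⟨rfl, q2, q3⟩
        · rintro ⟨rfl, q2, q3⟩
          exact ⟨iff_of_false (fun h => h rfl) he1, q2, q3⟩))
    have E2 : Nat.card {u : α // (u ≠ a' ↔ e1) ∧ (u ≠ c ↔ e2) ∧ (u ≠ b' ↔ e3)}
        = Nat.card {u : α // u = a' ∧ ((a' ≠ c ↔ e2) ∧ (a' ≠ b' ↔ e3))} :=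
      Nat.card_congr (Equiv.subtypeEquivRight (fun u => by
        constructor
        · rintro ⟨q1, q2, q3⟩
          have hub : u = a' := of_not_not (fun h => he1 (q1.mp h))
          subst hub; exact ⟨rfl, q2, q3⟩
        · rintro ⟨rfl, q2, q3⟩
          exact ⟨iff_of_false (fun h => h rfl) he1, q2, q3⟩))
    rw [E1, E2, card_eq_and, card_eq_and,
      propext (and_congr (iff_congr nac Iff.rfl) (iff_congr nab Iff.rfl))]

lemma card_pattern4 {α : Type} [Fintype α] [DecidableEq α] (c a b a' b' : α)
    (h1 : a = c ↔ a' = c) (h2 : b = c ↔ b' = c) (h3 : a = b ↔ a' = b')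
    (e1 e2 e2' e3 : Prop) :
    Nat.card {u : α // (a ≠ u ↔ e1) ∧ (c ≠ u ↔ e2) ∧ (c ≠ u ↔ e2') ∧ (u ≠ b ↔ e3)} =
    Nat.card {u : α // (a' ≠ u ↔ e1) ∧ (c ≠ u ↔ e2) ∧ (c ≠ u ↔ e2') ∧ (u ≠ b' ↔ e3)} := by
  by_cases hee : e2 ↔ e2'
  · have E1 : Nat.card {u : α // (a ≠ u ↔ e1) ∧ (c ≠ u ↔ e2) ∧ (c ≠ u ↔ e2') ∧ (u ≠ b ↔ e3)}
        = Nat.card {u : α // (u ≠ a ↔ e1) ∧ (u ≠ c ↔ e2) ∧ (u ≠ b ↔ e3)} :=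
      Nat.card_congr (Equiv.subtypeEquivRight (fun u => by
        constructor
        · rintro ⟨q1, q2, _, q4⟩
          exact ⟨by simpa [ne_comm] using q1, by simpa [ne_comm] using q2, q4⟩
        · rintro ⟨q1, q2, q4⟩
          exact ⟨by simpa [ne_comm] using q1, by simpa [ne_comm] using q2,
            by rw [← hee]; simpa [ne_comm] using q2, q4⟩))
    have E2 : Nat.card {u : α // (a' ≠ u ↔ e1) ∧ (c ≠ u ↔ e2) ∧ (c ≠ u ↔ e2') ∧ (u ≠ b' ↔ e3)}
        = Nat.card {u : α // (u ≠ a' ↔ e1) ∧ (u ≠ c ↔ e2) ∧ (u ≠ b' ↔ e3)} :=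
      Nat.card_congr (Equiv.subtypeEquivRight (fun u => by
        constructor
        · rintro ⟨q1, q2, _, q4⟩
          exact ⟨by simpa [ne_comm] using q1, by simpa [ne_comm] using q2, q4⟩
        · rintro ⟨q1, q2, q4⟩
          exact ⟨by simpa [ne_comm] using q1, by simpa [ne_comm] using q2,
            by rw [← hee]; simpa [ne_comm] using q2, q4⟩))
    rw [E1, E2]
    exact card_pattern3 a c b a' b' h1 h2 h3 e1 e2 e3
  · haveI i1 : IsEmpty {u : α // (a ≠ u ↔ e1) ∧ (c ≠ u ↔ e2) ∧ (c ≠ u ↔ e2') ∧ (u ≠ b ↔ e3)} :=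
      ⟨fun u => hee (u.2.2.1.symm.trans u.2.2.2.1)⟩
    haveI i2 : IsEmpty {u : α // (a' ≠ u ↔ e1) ∧ (c ≠ u ↔ e2) ∧ (c ≠ u ↔ e2') ∧ (u ≠ b' ↔ e3)} :=
      ⟨fun u => hee (u.2.2.1.symm.trans u.2.2.2.1)⟩
    rw [Nat.card_of_isEmpty, Nat.card_of_isEmpty]


section chunk2
set_option linter.unusedSectionVars false
variable {U} {F}
variable (x₀ : ∀ i, U i)

lemma iteIff {α : Sort _} {P Q : Prop} {dP : Decidable P} {dQ : Decidable Q} (a b : α)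
    (h : P ↔ Q) : (@ite _ P dP a b) = (@ite _ Q dQ a b) := by
  have hpq : P = Q := propext h
  subst hpq
  exact congrArg (fun d => @ite _ P d a b) (Subsingleton.elim dP dQ)

lemma count_eq (x y x' y' : ∀ k, U k)
    (h1 : dis x₀ x = dis x₀ x') (h2 : dis x y = dis x' y') (h3 : dis x₀ y = dis x₀ y')
    (j i g' j' : Finset (Fin n)) :
    Nat.card {z : ∀ k, U k // dis x z = j ∧ dis x₀ z = i ∧ dis x₀ z = g' ∧ dis z y = j'} =
    Nat.card {z : ∀ k, U k // dis x' z = j ∧ dis x₀ z = i ∧ dis x₀ z = g' ∧ dis z y' = j'} := by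
  have split : ∀ (xx yy : ∀ k, U k) (z : ∀ k, U k),
      (dis xx z = j ∧ dis x₀ z = i ∧ dis x₀ z = g' ∧ dis z yy = j') ↔
      (∀ k, (xx k ≠ z k ↔ k ∈ j) ∧ (x₀ k ≠ z k ↔ k ∈ i) ∧ (x₀ k ≠ z k ↔ k ∈ g') ∧
        (z k ≠ yy k ↔ k ∈ j')) := by
    intro xx yy z
    rw [dis_eq_iff, dis_eq_iff, dis_eq_iff, dis_eq_iff]
    exact ⟨fun ⟨hA, hB, hC, hD⟩ k => ⟨hA k, hB k, hC k, hD k⟩,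
      fun h => ⟨fun k => (h k).1, fun k => (h k).2.1, fun k => (h k).2.2.1,
        fun k => (h k).2.2.2⟩⟩
  rw [Nat.card_congr (Equiv.subtypeEquivRight (split x y)),
    Nat.card_congr (Equiv.subtypeEquivRight (split x' y')),
    Nat.card_congr (Equiv.subtypePiEquivPi (p := fun k (u : U k) =>
      (x k ≠ u ↔ k ∈ j) ∧ (x₀ k ≠ u ↔ k ∈ i) ∧ (x₀ k ≠ u ↔ k ∈ g') ∧ (u ≠ y k ↔ k ∈ j'))),
    Nat.card_congr (Equiv.subtypePiEquivPi (p := fun k (u : U k) =>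
      (x' k ≠ u ↔ k ∈ j) ∧ (x₀ k ≠ u ↔ k ∈ i) ∧ (x₀ k ≠ u ↔ k ∈ g') ∧ (u ≠ y' k ↔ k ∈ j'))),
    Nat.card_pi, Nat.card_pi]
  apply Finset.prod_congr rfl
  intro k _
  have h1k : x k = x₀ k ↔ x' k = x₀ k := by
    have := Finset.ext_iff.mp h1 k
    simp only [mem_dis, ne_eq, not_iff_not] at this
    exact ⟨fun hh => (this.mp hh.symm).symm, fun hh => (this.mpr hh.symm).symm⟩
  have h2k : y k = x₀ k ↔ y' k = x₀ k := by
    have := Finset.ext_iff.mp h3 k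
    simp only [mem_dis, ne_eq, not_iff_not] at this
    exact ⟨fun hh => (this.mp hh.symm).symm, fun hh => (this.mpr hh.symm).symm⟩
  have h3k : x k = y k ↔ x' k = y' k := by
    have := Finset.ext_iff.mp h2 k
    simp only [mem_dis, ne_eq, not_iff_not] at this
    exact this
  exact card_pattern4 (x₀ k) (x k) (y k) (x' k) (y' k) h1k h2k h3k
    (k ∈ j) (k ∈ i) (k ∈ g') (k ∈ j')

lemma mul_apply_M (g j i g' j' i' : Finset (Fin n)) (x y : ∀ k, U k) :
    (Mmat U F x₀ g j i * Mmat U F x₀ g' j' i') x y =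
    if dis x₀ x = g ∧ dis x₀ y = i' then
      ((Nat.card {z : ∀ k, U k // dis x z = j ∧ dis x₀ z = i ∧ dis x₀ z = g' ∧ dis z y = j'}
        : ℕ) : F)
    else 0 := by
  rw [Matrix.mul_apply]
  simp only [Mmat, Matrix.of_apply]
  have step : ∀ z : ∀ k, U k,
      (if dis x₀ x = g ∧ dis x z = j ∧ dis x₀ z = i then (1 : F) else 0) *
      (if dis x₀ z = g' ∧ dis z y = j' ∧ dis x₀ y = i' then (1 : F) else 0) =
      if (dis x₀ x = g ∧ dis x₀ y = i') ∧
        (dis x z = j ∧ dis x₀ z = i ∧ dis x₀ z = g' ∧ dis z y = j') then (1 : F) else 0 := by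
    intro z
    rw [ite_zero_mul_ite_zero, one_mul]
    exact iteIff _ _ (by tauto)
  simp only [step]
  by_cases houter : dis x₀ x = g ∧ dis x₀ y = i'
  · rw [if_pos houter]
    have : ∀ z : ∀ k, U k,
        (if (dis x₀ x = g ∧ dis x₀ y = i') ∧
          (dis x z = j ∧ dis x₀ z = i ∧ dis x₀ z = g' ∧ dis z y = j') then (1 : F) else 0) =
        (if (dis x z = j ∧ dis x₀ z = i ∧ dis x₀ z = g' ∧ dis z y = j') then (1 : F) else 0) := by
      intro z
      exact iteIff _ _ ⟨fun h => h.2, fun h => ⟨houter, h⟩⟩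
    simp only [this]
    rw [Finset.sum_boole]
    congr 1
    rw [Nat.card_eq_fintype_card, Fintype.card_subtype]
  · rw [if_neg houter]
    apply Finset.sum_eq_zero
    intro z _
    rw [if_neg (fun h => houter h.1)]

end chunk2

def Msp (x₀ : ∀ i, U i) : Submodule F (Matrix (∀ i, U i) (∀ i, U i) F) :=
  Submodule.span F (Set.range fun t : Finset (Fin n) × Finset (Fin n) × Finset (Fin n) =>
    Mmat U F x₀ t.1 t.2.1 t.2.2)

section chunk3
set_option linter.unusedSectionVars false
variable {U} {F}
variable (x₀ : ∀ i, U i)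

lemma M_mul_M_mem (g j i g' j' i' : Finset (Fin n)) :
    Mmat U F x₀ g j i * Mmat U F x₀ g' j' i' ∈ Msp U F x₀ := by
  classical
  have main : Mmat U F x₀ g j i * Mmat U F x₀ g' j' i' =
      ∑ D : Finset (Fin n), (if h : ∃ p : (∀ k, U k) × (∀ k, U k),
          dis x₀ p.1 = g ∧ dis p.1 p.2 = D ∧ dis x₀ p.2 = i' then
        ((Nat.card {z : ∀ k, U k // dis h.choose.1 z = j ∧ dis x₀ z = i ∧ dis x₀ z = g' ∧
          dis z h.choose.2 = j'} : ℕ) : F) else 0) • Mmat U F x₀ g D i' := by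
    ext x y
    rw [mul_apply_M, Matrix.sum_apply]
    simp only [Matrix.smul_apply, Mmat, Matrix.of_apply, smul_eq_mul]
    by_cases houter : dis x₀ x = g ∧ dis x₀ y = i'
    · rw [if_pos houter,
        Finset.sum_eq_single (dis x y)
          (fun D _ hD => by rw [if_neg (fun hc => hD hc.2.1.symm), mul_zero])
          (fun hmem => absurd (Finset.mem_univ _) hmem),
        if_pos ⟨houter.1, rfl, houter.2⟩, mul_one]
      have hex : ∃ p : (∀ k, U k) × (∀ k, U k),
          dis x₀ p.1 = g ∧ dis p.1 p.2 = dis x y ∧ dis x₀ p.2 = i' :=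
        ⟨(x, y), houter.1, rfl, houter.2⟩
      rw [dif_pos hex]
      exact congrArg _ (count_eq x₀ x y hex.choose.1 hex.choose.2
        (houter.1.trans hex.choose_spec.1.symm) hex.choose_spec.2.1.symm
        (houter.2.trans hex.choose_spec.2.2.symm) j i g' j')
    · rw [if_neg houter]
      symm
      apply Finset.sum_eq_zero
      intro D _
      rw [if_neg (fun hc => houter ⟨hc.1, hc.2.2⟩), mul_zero]
  rw [main]
  exact Submodule.sum_mem _ fun D _ =>
    Submodule.smul_mem _ _ (Submodule.subset_span ⟨(g, D, i'), rfl⟩)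

lemma one_mem_Msp : (1 : Matrix (∀ i, U i) (∀ i, U i) F) ∈ Msp U F x₀ := by
  have main : (1 : Matrix (∀ i, U i) (∀ i, U i) F) = ∑ S : Finset (Fin n),
      Mmat U F x₀ S ∅ S := by
    ext x y
    rw [Matrix.sum_apply, Matrix.one_apply]
    simp only [Mmat, Matrix.of_apply]
    by_cases hxy : x = y
    · subst hxy
      rw [if_pos rfl, Finset.sum_eq_single (dis x₀ x)
        (fun S _ hS => if_neg (fun hc => hS hc.1.symm))
        (fun hmem => absurd (Finset.mem_univ _) hmem),
        if_pos ⟨rfl, (dis_eq_empty x x).mpr rfl, rfl⟩]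
    · rw [if_neg hxy]
      symm
      apply Finset.sum_eq_zero
      intro S _
      exact if_neg (fun hc => hxy ((dis_eq_empty x y).mp hc.2.1))
  rw [main]
  exact Submodule.sum_mem _ fun S _ => Submodule.subset_span ⟨(S, ∅, S), rfl⟩

lemma Amat_eq_sum (j : Finset (Fin n)) : Amat U F j =
    ∑ gi : Finset (Fin n) × Finset (Fin n), Mmat U F x₀ gi.1 j gi.2 := by
  ext x y
  rw [Matrix.sum_apply]
  simp only [Mmat, Matrix.of_apply, Amat]
  rw [Finset.sum_eq_single (dis x₀ x, dis x₀ y)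
    (fun gi _ hgi => if_neg (fun hc => hgi (Prod.ext hc.1.symm hc.2.2.symm)))
    (fun hmem => absurd (Finset.mem_univ _) hmem)]
  by_cases hj : dis x y = j
  · rw [if_pos hj, if_pos ⟨rfl, hj, rfl⟩]
  · rw [if_neg hj, if_neg (fun hc => hj hc.2.1)]

lemma Emat_eq_M (S : Finset (Fin n)) : Emat U F x₀ S = Mmat U F x₀ S ∅ S := by
  ext x y
  simp only [Emat, Mmat, Matrix.diagonal, Matrix.of_apply]
  by_cases hxy : x = y
  · subst hxy
    rw [if_pos rfl]
    exact iteIff _ _ ⟨fun h => ⟨h, (dis_eq_empty x x).mpr rfl, h⟩, fun h => h.1⟩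
  · rw [if_neg hxy, if_neg (fun hc => hxy ((dis_eq_empty x y).mp hc.2.1))]

lemma Tw_eq_Msp : Subalgebra.toSubmodule (Tw U F x₀) = Msp U F x₀ := by
  apply le_antisymm
  · have hmul : ∀ a b : Matrix (∀ i, U i) (∀ i, U i) F,
        a ∈ Msp U F x₀ → b ∈ Msp U F x₀ → a * b ∈ Msp U F x₀ := by
      intro a b ha hb
      have key : Msp U F x₀ * Msp U F x₀ ≤ Msp U F x₀ := by
        rw [Msp, Submodule.span_mul_span]
        apply Submodule.span_le.mpr
        rintro m ⟨p, ⟨t, rfl⟩, q, ⟨t', rfl⟩, rfl⟩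
        exact M_mul_M_mem x₀ _ _ _ _ _ _
      exact key (Submodule.mul_mem_mul ha hb)
    have hadj : Tw U F x₀ ≤ (Msp U F x₀).toSubalgebra (one_mem_Msp x₀) hmul := by
      apply Algebra.adjoin_le
      rintro M (⟨S, rfl⟩ | ⟨S, rfl⟩)
      · show Amat U F S ∈ Msp U F x₀
        rw [Amat_eq_sum x₀ S]
        exact Submodule.sum_mem _ fun gi _ => Submodule.subset_span ⟨(gi.1, S, gi.2), rfl⟩
      · show Emat U F x₀ S ∈ Msp U F x₀
        rw [Emat_eq_M x₀ S]
        exact Submodule.subset_span ⟨(S, ∅, S), rfl⟩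
    intro m hm
    exact hadj hm
  · apply Submodule.span_le.mpr
    rintro m ⟨t, rfl⟩
    show Mmat U F x₀ t.1 t.2.1 t.2.2 ∈ Tw U F x₀
    rw [← Mmat_eq]
    exact mul_mem (mul_mem (Algebra.subset_adjoin (Or.inr ⟨t.1, rfl⟩))
      (Algebra.subset_adjoin (Or.inl ⟨t.2.1, rfl⟩)))
      (Algebra.subset_adjoin (Or.inr ⟨t.2.2, rfl⟩))

lemma Mmat_eq_zero (hU : ∀ i, 2 ≤ Fintype.card (U i))
    (t : Finset (Fin n) × Finset (Fin n) × Finset (Fin n)) (ht : t ∉ Pset U) :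
    Mmat U F x₀ t.1 t.2.1 t.2.2 = 0 := by
  ext x y
  simp only [Mmat, Matrix.of_apply, Matrix.zero_apply]
  rw [if_neg]
  rintro ⟨h1, h2, h3⟩
  exact ht ((mem_Pset_iff U hU x₀ t).mpr ⟨x, y, h1, h2, h3⟩)

lemma Msp_eq_restricted (hU : ∀ i, 2 ≤ Fintype.card (U i)) :
    Msp U F x₀ = Submodule.span F (Set.range fun t : {t // t ∈ Pset U} =>
      Mmat U F x₀ t.1.1 t.1.2.1 t.1.2.2) := by
  apply le_antisymm
  · apply Submodule.span_le.mpr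
    rintro m ⟨t, rfl⟩
    by_cases ht : t ∈ Pset U
    · exact Submodule.subset_span ⟨⟨t, ht⟩, rfl⟩
    · simp only
      rw [Mmat_eq_zero x₀ hU t ht]
      exact Submodule.zero_mem _
  · apply Submodule.span_le.mpr
    rintro m ⟨⟨t, ht⟩, rfl⟩
    exact Submodule.subset_span ⟨t, rfl⟩

lemma Bmat_eq_sum (g h i : Finset (Fin n)) : Bmat U F x₀ g h i =
    ∑ j ∈ Finset.univ.filter (fun j => symmDiff g i ⊆ j ∧ j ⊆ h), Mmat U F x₀ g j i :=
  Finset.sum_congr rfl fun j _ => Mmat_eq U F x₀ g j i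

lemma Bmat_mem (g h i : Finset (Fin n)) : Bmat U F x₀ g h i ∈ Msp U F x₀ := by
  rw [Bmat_eq_sum]
  exact Submodule.sum_mem _ fun j _ => Submodule.subset_span ⟨(g, j, i), rfl⟩

lemma M_in_spanB (hU : ∀ i, 2 ≤ Fintype.card (U i)) :
    ∀ (m : ℕ) (t : Finset (Fin n) × Finset (Fin n) × Finset (Fin n)),
      t ∈ Pset U → t.2.1.card = m →
      Mmat U F x₀ t.1 t.2.1 t.2.2 ∈ Submodule.span F (Set.range fun t : {t // t ∈ Pset U} =>
        Bmat U F x₀ t.1.1 t.1.2.1 t.1.2.2) := by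
  intro m
  induction m using Nat.strong_induction_on with
  | _ m IH =>
    rintro ⟨g, h, i⟩ ht hcard
    have ht' := ht
    simp only [Pset, Finset.mem_filter, Finset.mem_univ, true_and] at ht'
    have hmem : h ∈ Finset.univ.filter (fun j => symmDiff g i ⊆ j ∧ j ⊆ h) := by
      simp only [Finset.mem_filter, Finset.mem_univ, true_and]
      exact ⟨ht'.1, Finset.Subset.refl h⟩
    have hsplit : Mmat U F x₀ g h i = Bmat U F x₀ g h i -
        ∑ j ∈ (Finset.univ.filter (fun j => symmDiff g i ⊆ j ∧ j ⊆ h)).erase h,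
          Mmat U F x₀ g j i := by
      rw [Bmat_eq_sum, ← Finset.add_sum_erase _ _ hmem]
      exact (add_sub_cancel_right _ _).symm
    rw [hsplit]
    apply Submodule.sub_mem
    · exact Submodule.subset_span ⟨⟨(g, h, i), ht⟩, rfl⟩
    · apply Submodule.sum_mem
      intro j hj
      rw [Finset.mem_erase, Finset.mem_filter] at hj
      obtain ⟨hne, -, hsub, hsub2⟩ := hj
      have hlt : j.card < m := hcard ▸ Finset.card_lt_card
        (Finset.ssubset_iff_subset_ne.mpr ⟨hsub2, hne⟩)
      exact IH j.card hlt (g, j, i)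
        (by simp only [Pset, Finset.mem_filter, Finset.mem_univ, true_and]
            exact ⟨hsub, hsub2.trans ht'.2⟩) rfl

lemma spanB_eq (hU : ∀ i, 2 ≤ Fintype.card (U i)) :
    Submodule.span F (Set.range fun t : {t // t ∈ Pset U} =>
      Bmat U F x₀ t.1.1 t.1.2.1 t.1.2.2) = Msp U F x₀ := by
  apply le_antisymm
  · apply Submodule.span_le.mpr
    rintro m ⟨t, rfl⟩
    exact Bmat_mem x₀ _ _ _
  · rw [Msp_eq_restricted x₀ hU]
    apply Submodule.span_le.mpr
    rintro m ⟨⟨t, ht⟩, rfl⟩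
    exact M_in_spanB x₀ hU t.2.1.card t ht rfl

lemma M_indep (hU : ∀ i, 2 ≤ Fintype.card (U i)) :
    LinearIndependent F (fun t : {t // t ∈ Pset U} =>
      Mmat U F x₀ t.1.1 t.1.2.1 t.1.2.2) := by
  rw [Fintype.linearIndependent_iff]
  intro c hc t
  obtain ⟨x, y, hx, hxy, hy⟩ := (mem_Pset_iff U hU x₀ t.1).mp t.2
  have h0 := congrArg (fun M : Matrix (∀ i, U i) (∀ i, U i) F => M x y) hc
  simp only [Matrix.sum_apply, Matrix.smul_apply, Mmat, Matrix.of_apply, smul_eq_mul,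
    Matrix.zero_apply] at h0
  rw [Finset.sum_eq_single t
    (fun t' _ hne => by
      rw [if_neg, mul_zero]
      rintro ⟨a1, a2, a3⟩
      exact hne (Subtype.ext (Prod.ext (a1.symm.trans hx)
        (Prod.ext (a2.symm.trans hxy) (a3.symm.trans hy)))))
    (fun hmem => absurd (Finset.mem_univ _) hmem)] at h0
  rwa [if_pos ⟨hx, hxy, hy⟩, mul_one] at h0

end chunk3


def Lb (c : Bool) : Finset (Bool × Bool × Bool) :=
  Finset.univ.filter (fun p => ((p.1 ≠ p.2.2) → p.2.1 = true) ∧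
    (p.2.1 = true → (p.1 ≠ p.2.2) ∨ (p.1 = true ∧ p.2.2 = true ∧ c = true)))

lemma card_Lb_true : (Lb true).card = 5 := by decide

lemma card_Lb_false : (Lb false).card = 4 := by decide

section chunk4
set_option linter.unusedSectionVars false
variable {U} {F}

lemma mem_Pset_pattern (t : Finset (Fin n) × Finset (Fin n) × Finset (Fin n)) :
    t ∈ Pset U ↔ ∀ k : Fin n, ((decide (k ∈ t.1), decide (k ∈ t.2.1), decide (k ∈ t.2.2))
      ∈ Lb (decide (2 < Fintype.card (U k)))) := by
  obtain ⟨a, b, c⟩ := t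
  simp only [Pset, Finset.mem_filter, Finset.mem_univ, true_and, Lb, ne_eq,
    decide_eq_decide, decide_eq_true_eq, Finset.subset_iff, Finset.mem_symmDiff,
    Finset.mem_union, circ, Finset.mem_inter]
  constructor
  · rintro ⟨h1, h2⟩ k
    have H1 := @h1 k
    have H2 := @h2 k
    constructor
    · intro hne
      tauto
    · intro hb
      tauto
  · intro hk
    constructor
    · intro k hk'
      have := hk k
      tauto
    · intro k hk'
      have := hk k
      tauto

lemma Pset_card_eq (hU : ∀ i, 2 ≤ Fintype.card (U i)) :
    (Pset U).card = 2 ^ (2 * nOne U) * 5 ^ (nTwo U) := by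
  have hcard : (Pset U).card =
      (Fintype.piFinset (fun k : Fin n => Lb (decide (2 < Fintype.card (U k))))).card := by
    refine Finset.card_nbij'
      (i := fun t => fun k => (decide (k ∈ t.1), decide (k ∈ t.2.1), decide (k ∈ t.2.2)))
      (j := fun f => (Finset.univ.filter (fun k => (f k).1 = true),
        Finset.univ.filter (fun k => (f k).2.1 = true),
        Finset.univ.filter (fun k => (f k).2.2 = true))) ?hi ?hj ?left ?right
    case hi =>
      intro t ht
      exact Fintype.mem_piFinset.mpr ((mem_Pset_pattern t).mp ht)
    case hj =>
      intro f hf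
      apply (mem_Pset_pattern _).mpr
      intro k
      have hk : ((decide (k ∈ Finset.univ.filter (fun k => (f k).1 = true)),
          decide (k ∈ Finset.univ.filter (fun k => (f k).2.1 = true)),
          decide (k ∈ Finset.univ.filter (fun k => (f k).2.2 = true)))
            : Bool × Bool × Bool) = f k := by
        simp [Finset.mem_filter]
      rw [hk]
      exact Fintype.mem_piFinset.mp hf k
    case left =>
      intro t ht
      refine Prod.ext ?_ (Prod.ext ?_ ?_) <;> · ext k; simp
    case right =>
      intro f hf
      funext k
      refine Prod.ext ?_ (Prod.ext ?_ ?_) <;> simp [Finset.mem_filter]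
  rw [hcard, Fintype.card_piFinset]
  have hloc : ∀ k : Fin n, (Lb (decide (2 < Fintype.card (U k)))).card =
      if 2 < Fintype.card (U k) then 5 else 4 := by
    intro k
    by_cases hk : 2 < Fintype.card (U k) <;> simp [hk, card_Lb_true, card_Lb_false]
  rw [Finset.prod_congr rfl (fun k _ => hloc k), Finset.prod_ite, Finset.prod_const,
    Finset.prod_const]
  have h1 : (Finset.univ.filter (fun k : Fin n => ¬ 2 < Fintype.card (U k))).card = nOne U := by
    unfold nOne
    congr 1
    apply Finset.filter_congr
    intro k _
    simp only [not_lt]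
    exact ⟨fun h => le_antisymm h (hU k), fun h => le_of_eq h⟩
  have h2 : (Finset.univ.filter (fun k : Fin n => 2 < Fintype.card (U k))).card = nTwo U := rfl
  rw [h1, h2, show (4 : ℕ) = 2 ^ 2 from rfl, ← pow_mul, Nat.mul_comm]

end chunk4

/-- The matrices `B_{a,b,c}`, `(a,b,c) ∈ P`, form an `F`-basis of the
Terwilliger algebra `T`, and `|P| = 2^(2 n₁) ⬝ 5^(n₂)`. -/
theorem stmt3 (hn : 1 ≤ n) (hU : ∀ i, 2 ≤ Fintype.card (U i)) (x₀ : ∀ i, U i) :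
    (∃ b : Module.Basis {t : Finset (Fin n) × Finset (Fin n) × Finset (Fin n) // t ∈ Pset U} F
        (Tw U F x₀),
      ∀ t, ((b t : Tw U F x₀) : Matrix (∀ i, U i) (∀ i, U i) F) =
        Bmat U F x₀ t.1.1 t.1.2.1 t.1.2.2) ∧
    (Pset U).card = 2 ^ (2 * nOne U) * 5 ^ (nTwo U) := by
  refine ⟨?_, Pset_card_eq hU⟩
  classical
  let W : Submodule F (Matrix (∀ i, U i) (∀ i, U i) F) := Msp U F x₀
  let vM : {t : Finset (Fin n) × Finset (Fin n) × Finset (Fin n) // t ∈ Pset U} → W :=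
    fun t => ⟨Mmat U F x₀ t.1.1 t.1.2.1 t.1.2.2, Submodule.subset_span ⟨t.1, rfl⟩⟩
  have hindep : LinearIndependent F vM :=
    LinearIndependent.of_comp W.subtype (by
      have h1 : (W.subtype ∘ vM) = fun t => Mmat U F x₀ t.1.1 t.1.2.1 t.1.2.2 := rfl
      rw [h1]
      exact M_indep x₀ hU)
  have hspanM : Submodule.span F (Set.range vM) = ⊤ := by
    apply Submodule.map_injective_of_injective W.injective_subtype
    rw [Submodule.map_span, ← Set.range_comp, Submodule.map_top, Submodule.range_subtype]
    have h1 : (W.subtype ∘ vM) = fun t => Mmat U F x₀ t.1.1 t.1.2.1 t.1.2.2 := rfl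
    rw [h1]
    exact (Msp_eq_restricted x₀ hU).symm
  have hfinrank : Module.finrank F W =
      Fintype.card {t : Finset (Fin n) × Finset (Fin n) × Finset (Fin n) // t ∈ Pset U} :=
    Module.finrank_eq_card_basis (Module.Basis.mk hindep hspanM.ge)
  let vB : {t : Finset (Fin n) × Finset (Fin n) × Finset (Fin n) // t ∈ Pset U} → W :=
    fun t => ⟨Bmat U F x₀ t.1.1 t.1.2.1 t.1.2.2, Bmat_mem x₀ _ _ _⟩
  have hspanB : ⊤ ≤ Submodule.span F (Set.range vB) := by
    have hB : Submodule.span F (Set.range vB) = ⊤ := by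
      apply Submodule.map_injective_of_injective W.injective_subtype
      rw [Submodule.map_span, ← Set.range_comp, Submodule.map_top, Submodule.range_subtype]
      have h2 : (W.subtype ∘ vB) = fun t => Bmat U F x₀ t.1.1 t.1.2.1 t.1.2.2 := rfl
      rw [h2]
      exact spanB_eq x₀ hU
    exact hB.ge
  let b0 := basisOfTopLeSpanOfCardEqFinrank vB hspanB hfinrank.symm
  have hTw : Subalgebra.toSubmodule (Tw U F x₀) = W := Tw_eq_Msp x₀
  let e : W ≃ₗ[F] Subalgebra.toSubmodule (Tw U F x₀) := LinearEquiv.ofEq _ _ hTw.symm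
  refine ⟨b0.map e, ?_⟩
  intro t
  have hb0 : b0 t = vB t := by
    rw [show ⇑b0 = vB from coe_basisOfTopLeSpanOfCardEqFinrank vB hspanB hfinrank.symm]
  simp only [Module.Basis.map_apply, hb0]
  rfl

end
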